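/- Let ρ be a product measure of the counting measure μ on [0,1] and Lebesgue measure ν on ℝ that assigns the diagonal measure zero (for instance Mathlib's Measure.prod of μ and ν), and let ξ(E) = ν(f⁻¹(E ∩ Δ)). Then η := ρ + ξ is a product measure: for all Borel A ⊆ [0,1] and Borel B ⊆ ℝ, η(A×B) = μ(A)·ν(B). -/

import Mathlib

open MeasureTheory Set

noncomputable section

/-- `X = [0,1]` as a subtype of `ℝ`, carrying the Borel σ-algebra. -/
abbrev X : Type := Set.Icc (0 : ℝ) 1

/-- The diagonal `Δ = {(x, x) : x ∈ [0,1]} ⊆ X × ℝ`. -/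
def diag : Set (X × ℝ) := {p : X × ℝ | (p.1 : ℝ) = p.2}

/-- The diagonal map `f : [0,1] → [0,1] × ℝ`, `f(x) = (x, x)`. -/
def f : X → X × ℝ := fun x => (x, (x : ℝ))

/-- The set function `ξ(E) = ν(f⁻¹(E ∩ Δ))`, with the preimage viewed as a
subset of `ℝ` and `ν` the Lebesgue measure. -/
def xi (E : Set (X × ℝ)) : ENNReal :=
  volume ((fun x : X => (x : ℝ)) '' (f ⁻¹' (E ∩ diag)))

/-- If `ρ` is a product measure of the counting measure on `[0,1]` and Lebesgue
measure on `ℝ` with `ρ(Δ) = 0`, then `η := ρ + ξ` is again a product measure: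
`η(A × B) = μ(A) · ν(B)` for all Borel `A ⊆ [0,1]` and Borel `B ⊆ ℝ`. -/
theorem add_xi_is_product_measure (ρ : Measure (X × ℝ))
    (hρ : ∀ (A : Set X) (B : Set ℝ), MeasurableSet A → MeasurableSet B →
      ρ (A ×ˢ B) = Measure.count A * volume B)
    (hρΔ : ρ diag = 0) :
    ∀ (A : Set X) (B : Set ℝ), MeasurableSet A → MeasurableSet B →
      ρ (A ×ˢ B) + xi (A ×ˢ B) = Measure.count A * volume B := by
  intro A B hA hB
  rw [hρ A B hA hB]
  by_cases htop : Measure.count A * volume B = ⊤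
  · rw [htop, top_add]
  · have hS : (fun x : X => (x : ℝ)) '' (f ⁻¹' (A ×ˢ B ∩ diag))
        ⊆ (Subtype.val '' A) ∩ B := by
      rintro x ⟨a, ha, rfl⟩
      obtain ⟨⟨haA, haB⟩, -⟩ := ha
      exact ⟨⟨a, haA, rfl⟩, haB⟩
    have hxi : xi (A ×ˢ B) = 0 := by
      by_cases hB0 : volume B = 0
      · refine le_antisymm ?_ zero_le
        calc xi (A ×ˢ B) ≤ volume B := measure_mono (fun x hx => (hS hx).2)
          _ = 0 := hB0
      · have hAfin : A.Finite := by
          rw [← Measure.count_apply_lt_top' hA, lt_top_iff_ne_top]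
          intro hc
          exact htop (by rw [hc, ENNReal.top_mul hB0])
        refine le_antisymm ?_ zero_le
        calc xi (A ×ˢ B) ≤ volume (Subtype.val '' A) :=
              measure_mono (fun x hx => (hS hx).1)
          _ = 0 := (hAfin.image _).measure_zero _
    rw [hxi, add_zero]
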